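/- Let k be a field and R = k[s,t,u,v]/(s², sv, t², tv, u², uv, v² − st − su). Then there is no element x in R with ann(x) = (x). -/

import Mathlib

open MvPolynomial

set_option synthInstance.maxHeartbeats 1000000
set_option maxHeartbeats 1000000
set_option linter.unusedSectionVars false
set_option linter.dupNamespace false

/-- The defining ideal of `R = k[s,t,u,v]/(s², sv, t², tv, u², uv, v² - st - su)`. -/
noncomputable def I14 (k : Type u) [CommRing k] : Ideal (MvPolynomial (Fin 4) k) :=
  Ideal.span {X 0 ^ 2, X 0 * X 3, X 1 ^ 2, X 1 * X 3, X 2 ^ 2, X 2 * X 3,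
    X 3 ^ 2 - X 0 * X 1 - X 0 * X 2}

/-- The ring `R = k[s,t,u,v]/(s², sv, t², tv, u², uv, v² - st - su)`. -/
abbrev R14 (k : Type u) [CommRing k] : Type u := MvPolynomial (Fin 4) k ⧸ I14 k

/-- The annihilator of an element of `R` as an ideal. -/
def annIdeal (R : Type u) [CommRing R] (a : R) : Ideal R :=
  LinearMap.ker (LinearMap.mulLeft R a)

/-! ### Auxiliary: an explicit 8-dimensional model of `R14 k`. -/

structure A8 (k : Type u) where
  c0 : k
  c1 : k
  c2 : k
  c3 : k
  c4 : k
  c5 : k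
  c6 : k
  c7 : k

namespace A8

variable {k : Type u} [CommRing k]

@[ext] theorem ext' {x y : A8 k} (h0 : x.c0 = y.c0) (h1 : x.c1 = y.c1) (h2 : x.c2 = y.c2)
    (h3 : x.c3 = y.c3) (h4 : x.c4 = y.c4) (h5 : x.c5 = y.c5) (h6 : x.c6 = y.c6)
    (h7 : x.c7 = y.c7) : x = y := by
  cases x; cases y; simp_all

instance : Zero (A8 k) := ⟨⟨0,0,0,0,0,0,0,0⟩⟩
instance : One (A8 k) := ⟨⟨1,0,0,0,0,0,0,0⟩⟩
instance : Add (A8 k) :=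
  ⟨fun x y => ⟨x.c0+y.c0, x.c1+y.c1, x.c2+y.c2, x.c3+y.c3, x.c4+y.c4, x.c5+y.c5, x.c6+y.c6, x.c7+y.c7⟩⟩
instance : Neg (A8 k) := ⟨fun x => ⟨-x.c0, -x.c1, -x.c2, -x.c3, -x.c4, -x.c5, -x.c6, -x.c7⟩⟩
instance : Mul (A8 k) :=
  ⟨fun x y => ⟨x.c0*y.c0,
    x.c0*y.c1 + x.c1*y.c0,
    x.c0*y.c2 + x.c2*y.c0,
    x.c0*y.c3 + x.c3*y.c0,
    x.c0*y.c4 + x.c4*y.c0,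
    x.c0*y.c5 + x.c5*y.c0 + x.c1*y.c2 + x.c2*y.c1 + x.c4*y.c4,
    x.c0*y.c6 + x.c6*y.c0 + x.c1*y.c3 + x.c3*y.c1 + x.c4*y.c4,
    x.c0*y.c7 + x.c7*y.c0 + x.c2*y.c3 + x.c3*y.c2⟩⟩

@[simp] theorem zero_c0 : (0 : A8 k).c0 = 0 := rfl
@[simp] theorem zero_c1 : (0 : A8 k).c1 = 0 := rfl
@[simp] theorem zero_c2 : (0 : A8 k).c2 = 0 := rfl
@[simp] theorem zero_c3 : (0 : A8 k).c3 = 0 := rfl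
@[simp] theorem zero_c4 : (0 : A8 k).c4 = 0 := rfl
@[simp] theorem zero_c5 : (0 : A8 k).c5 = 0 := rfl
@[simp] theorem zero_c6 : (0 : A8 k).c6 = 0 := rfl
@[simp] theorem zero_c7 : (0 : A8 k).c7 = 0 := rfl

@[simp] theorem one_c0 : (1 : A8 k).c0 = 1 := rfl
@[simp] theorem one_c1 : (1 : A8 k).c1 = 0 := rfl
@[simp] theorem one_c2 : (1 : A8 k).c2 = 0 := rfl
@[simp] theorem one_c3 : (1 : A8 k).c3 = 0 := rfl
@[simp] theorem one_c4 : (1 : A8 k).c4 = 0 := rfl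
@[simp] theorem one_c5 : (1 : A8 k).c5 = 0 := rfl
@[simp] theorem one_c6 : (1 : A8 k).c6 = 0 := rfl
@[simp] theorem one_c7 : (1 : A8 k).c7 = 0 := rfl

@[simp] theorem add_c0 (x y : A8 k) : (x+y).c0 = x.c0 + y.c0 := rfl
@[simp] theorem add_c1 (x y : A8 k) : (x+y).c1 = x.c1 + y.c1 := rfl
@[simp] theorem add_c2 (x y : A8 k) : (x+y).c2 = x.c2 + y.c2 := rfl
@[simp] theorem add_c3 (x y : A8 k) : (x+y).c3 = x.c3 + y.c3 := rfl
@[simp] theorem add_c4 (x y : A8 k) : (x+y).c4 = x.c4 + y.c4 := rfl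
@[simp] theorem add_c5 (x y : A8 k) : (x+y).c5 = x.c5 + y.c5 := rfl
@[simp] theorem add_c6 (x y : A8 k) : (x+y).c6 = x.c6 + y.c6 := rfl
@[simp] theorem add_c7 (x y : A8 k) : (x+y).c7 = x.c7 + y.c7 := rfl

@[simp] theorem neg_c0 (x : A8 k) : (-x).c0 = -x.c0 := rfl
@[simp] theorem neg_c1 (x : A8 k) : (-x).c1 = -x.c1 := rfl
@[simp] theorem neg_c2 (x : A8 k) : (-x).c2 = -x.c2 := rfl
@[simp] theorem neg_c3 (x : A8 k) : (-x).c3 = -x.c3 := rfl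
@[simp] theorem neg_c4 (x : A8 k) : (-x).c4 = -x.c4 := rfl
@[simp] theorem neg_c5 (x : A8 k) : (-x).c5 = -x.c5 := rfl
@[simp] theorem neg_c6 (x : A8 k) : (-x).c6 = -x.c6 := rfl
@[simp] theorem neg_c7 (x : A8 k) : (-x).c7 = -x.c7 := rfl

@[simp] theorem mul_c0 (x y : A8 k) : (x*y).c0 = x.c0*y.c0 := rfl
@[simp] theorem mul_c1 (x y : A8 k) : (x*y).c1 = x.c0*y.c1 + x.c1*y.c0 := rfl
@[simp] theorem mul_c2 (x y : A8 k) : (x*y).c2 = x.c0*y.c2 + x.c2*y.c0 := rfl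
@[simp] theorem mul_c3 (x y : A8 k) : (x*y).c3 = x.c0*y.c3 + x.c3*y.c0 := rfl
@[simp] theorem mul_c4 (x y : A8 k) : (x*y).c4 = x.c0*y.c4 + x.c4*y.c0 := rfl
@[simp] theorem mul_c5 (x y : A8 k) :
    (x*y).c5 = x.c0*y.c5 + x.c5*y.c0 + x.c1*y.c2 + x.c2*y.c1 + x.c4*y.c4 := rfl
@[simp] theorem mul_c6 (x y : A8 k) :
    (x*y).c6 = x.c0*y.c6 + x.c6*y.c0 + x.c1*y.c3 + x.c3*y.c1 + x.c4*y.c4 := rfl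
@[simp] theorem mul_c7 (x y : A8 k) :
    (x*y).c7 = x.c0*y.c7 + x.c7*y.c0 + x.c2*y.c3 + x.c3*y.c2 := rfl

instance : CommRing (A8 k) where
  add_assoc x y z := by ext <;> simp <;> ring
  zero_add x := by ext <;> simp
  add_zero x := by ext <;> simp
  add_comm x y := by ext <;> simp <;> ring
  neg_add_cancel x := by ext <;> simp
  mul_assoc x y z := by ext <;> simp <;> ring
  one_mul x := by ext <;> simp
  mul_one x := by ext <;> simp
  left_distrib x y z := by ext <;> simp <;> ring
  right_distrib x y z := by ext <;> simp <;> ring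
  zero_mul x := by ext <;> simp
  mul_zero x := by ext <;> simp
  mul_comm x y := by ext <;> simp <;> ring
  nsmul := nsmulRec
  zsmul := zsmulRec

@[simp] theorem sub_c0 (x y : A8 k) : (x-y).c0 = x.c0 - y.c0 := by
  rw [sub_eq_add_neg, sub_eq_add_neg]; simp
@[simp] theorem sub_c1 (x y : A8 k) : (x-y).c1 = x.c1 - y.c1 := by
  rw [sub_eq_add_neg, sub_eq_add_neg]; simp
@[simp] theorem sub_c2 (x y : A8 k) : (x-y).c2 = x.c2 - y.c2 := by
  rw [sub_eq_add_neg, sub_eq_add_neg]; simp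
@[simp] theorem sub_c3 (x y : A8 k) : (x-y).c3 = x.c3 - y.c3 := by
  rw [sub_eq_add_neg, sub_eq_add_neg]; simp
@[simp] theorem sub_c4 (x y : A8 k) : (x-y).c4 = x.c4 - y.c4 := by
  rw [sub_eq_add_neg, sub_eq_add_neg]; simp
@[simp] theorem sub_c5 (x y : A8 k) : (x-y).c5 = x.c5 - y.c5 := by
  rw [sub_eq_add_neg, sub_eq_add_neg]; simp
@[simp] theorem sub_c6 (x y : A8 k) : (x-y).c6 = x.c6 - y.c6 := by
  rw [sub_eq_add_neg, sub_eq_add_neg]; simp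
@[simp] theorem sub_c7 (x y : A8 k) : (x-y).c7 = x.c7 - y.c7 := by
  rw [sub_eq_add_neg, sub_eq_add_neg]; simp

def ι : k →+* A8 k where
  toFun a := ⟨a,0,0,0,0,0,0,0⟩
  map_one' := rfl
  map_mul' a b := by ext <;> simp
  map_zero' := rfl
  map_add' a b := by ext <;> simp

instance : Algebra k (A8 k) := (ι (k := k)).toAlgebra

@[simp] theorem smul_c0 (a : k) (x : A8 k) : (a • x).c0 = a * x.c0 := by
  show (ι a * x).c0 = _ ; simp [ι]
@[simp] theorem smul_c1 (a : k) (x : A8 k) : (a • x).c1 = a * x.c1 := by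
  show (ι a * x).c1 = _ ; simp [ι]
@[simp] theorem smul_c2 (a : k) (x : A8 k) : (a • x).c2 = a * x.c2 := by
  show (ι a * x).c2 = _ ; simp [ι]
@[simp] theorem smul_c3 (a : k) (x : A8 k) : (a • x).c3 = a * x.c3 := by
  show (ι a * x).c3 = _ ; simp [ι]
@[simp] theorem smul_c4 (a : k) (x : A8 k) : (a • x).c4 = a * x.c4 := by
  show (ι a * x).c4 = _ ; simp [ι]
@[simp] theorem smul_c5 (a : k) (x : A8 k) : (a • x).c5 = a * x.c5 := by
  show (ι a * x).c5 = _ ; simp [ι]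
@[simp] theorem smul_c6 (a : k) (x : A8 k) : (a • x).c6 = a * x.c6 := by
  show (ι a * x).c6 = _ ; simp [ι]
@[simp] theorem smul_c7 (a : k) (x : A8 k) : (a • x).c7 = a * x.c7 := by
  show (ι a * x).c7 = _ ; simp [ι]

@[simp] theorem algebraMap_c0 (a : k) : (algebraMap k (A8 k) a).c0 = a := rfl
@[simp] theorem algebraMap_c1 (a : k) : (algebraMap k (A8 k) a).c1 = 0 := rfl
@[simp] theorem algebraMap_c2 (a : k) : (algebraMap k (A8 k) a).c2 = 0 := rfl
@[simp] theorem algebraMap_c3 (a : k) : (algebraMap k (A8 k) a).c3 = 0 := rfl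
@[simp] theorem algebraMap_c4 (a : k) : (algebraMap k (A8 k) a).c4 = 0 := rfl
@[simp] theorem algebraMap_c5 (a : k) : (algebraMap k (A8 k) a).c5 = 0 := rfl
@[simp] theorem algebraMap_c6 (a : k) : (algebraMap k (A8 k) a).c6 = 0 := rfl
@[simp] theorem algebraMap_c7 (a : k) : (algebraMap k (A8 k) a).c7 = 0 := rfl

/-- basis vectors of `A8` -/
def eS : A8 k := ⟨0,1,0,0,0,0,0,0⟩
def eT : A8 k := ⟨0,0,1,0,0,0,0,0⟩
def eU : A8 k := ⟨0,0,0,1,0,0,0,0⟩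
def eV : A8 k := ⟨0,0,0,0,1,0,0,0⟩
def eST : A8 k := ⟨0,0,0,0,0,1,0,0⟩
def eSU : A8 k := ⟨0,0,0,0,0,0,1,0⟩
def eTU : A8 k := ⟨0,0,0,0,0,0,0,1⟩

end A8

namespace Stmt15Aux

open A8

variable {k : Type u} [CommRing k]

noncomputable def π : MvPolynomial (Fin 4) k →ₐ[k] R14 k := Ideal.Quotient.mkₐ k (I14 k)

theorem mem1 : (X 0 ^ 2 : MvPolynomial (Fin 4) k) ∈ I14 k :=
  Ideal.subset_span (by simp)
theorem mem2 : (X 0 * X 3 : MvPolynomial (Fin 4) k) ∈ I14 k :=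
  Ideal.subset_span (by simp)
theorem mem3 : (X 1 ^ 2 : MvPolynomial (Fin 4) k) ∈ I14 k :=
  Ideal.subset_span (by simp)
theorem mem4 : (X 1 * X 3 : MvPolynomial (Fin 4) k) ∈ I14 k :=
  Ideal.subset_span (by simp)
theorem mem5 : (X 2 ^ 2 : MvPolynomial (Fin 4) k) ∈ I14 k :=
  Ideal.subset_span (by simp)
theorem mem6 : (X 2 * X 3 : MvPolynomial (Fin 4) k) ∈ I14 k :=
  Ideal.subset_span (by simp)
theorem mem7 : (X 3 ^ 2 - X 0 * X 1 - X 0 * X 2 : MvPolynomial (Fin 4) k) ∈ I14 k :=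
  Ideal.subset_span (by simp)

theorem mem_stu : (X 0 * X 1 * X 2 : MvPolynomial (Fin 4) k) ∈ I14 k := by
  have h : (X 0 * X 1 * X 2 : MvPolynomial (Fin 4) k) =
      X 3 * (X 2 * X 3) - X 0 * (X 2 ^ 2)
        - X 2 * (X 3 ^ 2 - X 0 * X 1 - X 0 * X 2) := by ring
  rw [h]
  exact sub_mem (sub_mem ((I14 k).mul_mem_left _ mem6) ((I14 k).mul_mem_left _ mem5))
    ((I14 k).mul_mem_left _ mem7)

theorem pz {p : MvPolynomial (Fin 4) k} (h : p ∈ I14 k) : π (k := k) p = 0 := by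
  simpa [π] using (Ideal.Quotient.eq_zero_iff_mem).2 h

noncomputable def S : R14 k := π (X 0)
noncomputable def T : R14 k := π (X 1)
noncomputable def U : R14 k := π (X 2)
noncomputable def V : R14 k := π (X 3)
noncomputable def ST : R14 k := π (X 0 * X 1)
noncomputable def SU : R14 k := π (X 0 * X 2)
noncomputable def TU : R14 k := π (X 1 * X 2)

theorem memtac {p : MvPolynomial (Fin 4) k} (q g : MvPolynomial (Fin 4) k)
    (hg : g ∈ I14 k) (h : p = q * g) : π (k := k) p = 0 :=
  pz (h ▸ (I14 k).mul_mem_left q hg)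

@[simp] theorem rSS : (S : R14 k) * S = 0 := by
  rw [S, ← map_mul]; exact memtac 1 _ mem1 (by ring)
@[simp] theorem rST : (S : R14 k) * T = ST := by rw [S, T, ST, ← map_mul]
@[simp] theorem rSU : (S : R14 k) * U = SU := by rw [S, U, SU, ← map_mul]
@[simp] theorem rSV : (S : R14 k) * V = 0 := by
  rw [S, V, ← map_mul]; exact memtac 1 _ mem2 (by ring)
@[simp] theorem rTT : (T : R14 k) * T = 0 := by
  rw [T, ← map_mul]; exact memtac 1 _ mem3 (by ring)
@[simp] theorem rTU : (T : R14 k) * U = TU := by rw [T, U, TU, ← map_mul]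
@[simp] theorem rTV : (T : R14 k) * V = 0 := by
  rw [T, V, ← map_mul]; exact memtac 1 _ mem4 (by ring)
@[simp] theorem rUU : (U : R14 k) * U = 0 := by
  rw [U, ← map_mul]; exact memtac 1 _ mem5 (by ring)
@[simp] theorem rUV : (U : R14 k) * V = 0 := by
  rw [U, V, ← map_mul]; exact memtac 1 _ mem6 (by ring)
@[simp] theorem rVV : (V : R14 k) * V = ST + SU := by
  rw [V, ST, SU, ← map_mul, ← map_add]
  have h : (X 3 * X 3 : MvPolynomial (Fin 4) k) =
      (X 3 ^ 2 - X 0 * X 1 - X 0 * X 2) + (X 0 * X 1 + X 0 * X 2) := by ring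
  rw [h, map_add, pz mem7, zero_add]

@[simp] theorem rS_ST : (S : R14 k) * ST = 0 := by
  rw [S, ST, ← map_mul]; exact memtac (X 1) _ mem1 (by ring)
@[simp] theorem rS_SU : (S : R14 k) * SU = 0 := by
  rw [S, SU, ← map_mul]; exact memtac (X 2) _ mem1 (by ring)
@[simp] theorem rS_TU : (S : R14 k) * TU = 0 := by
  rw [S, TU, ← map_mul]; exact memtac 1 _ mem_stu (by ring)
@[simp] theorem rT_ST : (T : R14 k) * ST = 0 := by
  rw [T, ST, ← map_mul]; exact memtac (X 0) _ mem3 (by ring)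
@[simp] theorem rT_SU : (T : R14 k) * SU = 0 := by
  rw [T, SU, ← map_mul]; exact memtac 1 _ mem_stu (by ring)
@[simp] theorem rT_TU : (T : R14 k) * TU = 0 := by
  rw [T, TU, ← map_mul]; exact memtac (X 2) _ mem3 (by ring)
@[simp] theorem rU_ST : (U : R14 k) * ST = 0 := by
  rw [U, ST, ← map_mul]; exact memtac 1 _ mem_stu (by ring)
@[simp] theorem rU_SU : (U : R14 k) * SU = 0 := by
  rw [U, SU, ← map_mul]; exact memtac (X 0) _ mem5 (by ring)
@[simp] theorem rU_TU : (U : R14 k) * TU = 0 := by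
  rw [U, TU, ← map_mul]; exact memtac (X 1) _ mem5 (by ring)
@[simp] theorem rV_ST : (V : R14 k) * ST = 0 := by
  rw [V, ST, ← map_mul]; exact memtac (X 1) _ mem2 (by ring)
@[simp] theorem rV_SU : (V : R14 k) * SU = 0 := by
  rw [V, SU, ← map_mul]; exact memtac (X 2) _ mem2 (by ring)
@[simp] theorem rV_TU : (V : R14 k) * TU = 0 := by
  rw [V, TU, ← map_mul]; exact memtac (X 2) _ mem4 (by ring)
@[simp] theorem rST_ST : (ST : R14 k) * ST = 0 := by
  rw [ST, ← map_mul]; exact memtac (X 1 ^ 2) _ mem1 (by ring)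
@[simp] theorem rST_SU : (ST : R14 k) * SU = 0 := by
  rw [ST, SU, ← map_mul]; exact memtac (X 1 * X 2) _ mem1 (by ring)
@[simp] theorem rST_TU : (ST : R14 k) * TU = 0 := by
  rw [ST, TU, ← map_mul]; exact memtac (X 0 * X 2) _ mem3 (by ring)
@[simp] theorem rSU_SU : (SU : R14 k) * SU = 0 := by
  rw [SU, ← map_mul]; exact memtac (X 2 ^ 2) _ mem1 (by ring)
@[simp] theorem rSU_TU : (SU : R14 k) * TU = 0 := by
  rw [SU, TU, ← map_mul]; exact memtac (X 0 * X 1) _ mem5 (by ring)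
@[simp] theorem rTU_TU : (TU : R14 k) * TU = 0 := by
  rw [TU, ← map_mul]; exact memtac (X 1 ^ 2) _ mem5 (by ring)

/-- the map from the polynomial ring to the model -/
noncomputable def ev : MvPolynomial (Fin 4) k →ₐ[k] A8 k :=
  aeval ![eS, eT, eU, eV]

theorem ev_ker : ∀ p ∈ I14 k, ev (k := k) p = 0 := by
  intro p hp
  have h : I14 k ≤ RingHom.ker (ev (k := k)).toRingHom := by
    rw [I14, Ideal.span_le]
    rintro q hq
    simp only [Set.mem_insert_iff, Set.mem_singleton_iff] at hq
    rcases hq with rfl|rfl|rfl|rfl|rfl|rfl|rfl <;>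
      · show ev _ = 0
        simp only [ev, map_sub, map_mul, map_pow, aeval_X]
        ext <;> simp [pow_two, eS, eT, eU, eV]
  exact h hp

/-- the forward algebra hom `R14 k →ₐ[k] A8 k` -/
noncomputable def φ : R14 k →ₐ[k] A8 k :=
  Ideal.Quotient.liftₐ (I14 k) ev ev_ker

/-- the backward map -/
noncomputable def ψfun (x : A8 k) : R14 k :=
  x.c0 • 1 + x.c1 • S + x.c2 • T + x.c3 • U + x.c4 • V + x.c5 • ST + x.c6 • SU + x.c7 • TU

noncomputable def ψ : A8 k →ₐ[k] R14 k where
  toFun := ψfun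
  map_one' := by simp [ψfun]
  map_mul' x y := by
    simp only [ψfun, A8.mul_c0, A8.mul_c1, A8.mul_c2, A8.mul_c3, A8.mul_c4, A8.mul_c5,
      A8.mul_c6, A8.mul_c7]
    simp only [mul_add, add_mul, smul_mul_smul_comm, rSS, rST, rSU, rSV, rTT, rTU, rTV, rUU,
      rUV, rVV, rS_ST, rS_SU, rS_TU, rT_ST, rT_SU, rT_TU, rU_ST, rU_SU, rU_TU, rV_ST, rV_SU,
      rV_TU, rST_ST, rST_SU, rST_TU, rSU_SU, rSU_TU, rTU_TU, mul_one, one_mul, smul_zero,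
      add_zero, zero_add, smul_add]
    -- remaining products with reversed order
    rw [show (T : R14 k) * S = ST by rw [mul_comm]; exact rST,
        show (U : R14 k) * S = SU by rw [mul_comm]; exact rSU,
        show (U : R14 k) * T = TU by rw [mul_comm]; exact rTU,
        show (V : R14 k) * S = 0 by rw [mul_comm]; exact rSV,
        show (V : R14 k) * T = 0 by rw [mul_comm]; exact rTV,
        show (V : R14 k) * U = 0 by rw [mul_comm]; exact rUV,
        show (ST : R14 k) * S = 0 by rw [mul_comm]; exact rS_ST,
        show (ST : R14 k) * T = 0 by rw [mul_comm]; exact rT_ST,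
        show (ST : R14 k) * U = 0 by rw [mul_comm]; exact rU_ST,
        show (ST : R14 k) * V = 0 by rw [mul_comm]; exact rV_ST,
        show (SU : R14 k) * S = 0 by rw [mul_comm]; exact rS_SU,
        show (SU : R14 k) * T = 0 by rw [mul_comm]; exact rT_SU,
        show (SU : R14 k) * U = 0 by rw [mul_comm]; exact rU_SU,
        show (SU : R14 k) * V = 0 by rw [mul_comm]; exact rV_SU,
        show (SU : R14 k) * ST = 0 by rw [mul_comm]; exact rST_SU,
        show (TU : R14 k) * S = 0 by rw [mul_comm]; exact rS_TU,
        show (TU : R14 k) * T = 0 by rw [mul_comm]; exact rT_TU,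
        show (TU : R14 k) * U = 0 by rw [mul_comm]; exact rU_TU,
        show (TU : R14 k) * V = 0 by rw [mul_comm]; exact rV_TU,
        show (TU : R14 k) * ST = 0 by rw [mul_comm]; exact rST_TU,
        show (TU : R14 k) * SU = 0 by rw [mul_comm]; exact rSU_TU]
    simp only [smul_zero, add_zero, zero_add]
    module
  map_zero' := by simp [ψfun]
  map_add' x y := by
    simp only [ψfun, A8.add_c0, A8.add_c1, A8.add_c2, A8.add_c3, A8.add_c4, A8.add_c5,
      A8.add_c6, A8.add_c7]
    module
  commutes' a := by
    simp only [ψfun, A8.algebraMap_c0, A8.algebraMap_c1, A8.algebraMap_c2, A8.algebraMap_c3,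
      A8.algebraMap_c4, A8.algebraMap_c5, A8.algebraMap_c6, A8.algebraMap_c7, zero_smul,
      add_zero, zero_add]
    rw [Algebra.algebraMap_eq_smul_one]

@[simp] theorem φ_π (p : MvPolynomial (Fin 4) k) : φ (π p) = ev (k := k) p := by
  simp [φ, π, ev]
  rfl

@[simp] theorem φ_S : φ (S : R14 k) = eS := by
  rw [S, φ_π]; simp [ev, eS]
@[simp] theorem φ_T : φ (T : R14 k) = eT := by
  rw [T, φ_π]; simp [ev, eT]
@[simp] theorem φ_U : φ (U : R14 k) = eU := by
  rw [U, φ_π]; simp [ev, eU]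
@[simp] theorem φ_V : φ (V : R14 k) = eV := by
  rw [V, φ_π]; simp [ev, eV]
@[simp] theorem φ_ST : φ (ST : R14 k) = eST := by
  rw [ST, φ_π]; simp only [ev, map_mul, aeval_X]
  ext <;> simp [eS, eT, eST]
@[simp] theorem φ_SU : φ (SU : R14 k) = eSU := by
  rw [SU, φ_π]; simp only [ev, map_mul, aeval_X]
  ext <;> simp [eS, eU, eSU]
@[simp] theorem φ_TU : φ (TU : R14 k) = eTU := by
  rw [TU, φ_π]; simp only [ev, map_mul, aeval_X]
  ext <;> simp [eT, eU, eTU]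

theorem φψ (x : A8 k) : φ (ψ x) = x := by
  show φ (ψfun x) = x
  simp only [ψfun, map_add, map_smul, map_one, φ_S, φ_T, φ_U, φ_V, φ_ST, φ_SU, φ_TU]
  ext <;> simp [eS, eT, eU, eV, eST, eSU, eTU]

theorem ψφ (x : R14 k) : ψ (φ x) = x := by
  have h : (ψ (k := k)).comp φ = AlgHom.id k (R14 k) := by
    apply Ideal.Quotient.algHom_ext
    apply MvPolynomial.algHom_ext
    intro i
    show ψ (φ (π (X i))) = π (X i)
    rw [φ_π]
    fin_cases i <;>
      · show ψ _ = _
        simp only [ev, aeval_X]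
        show ψfun _ = _
        simp [ψfun, eS, eT, eU, eV, S, T, U, V]
  calc ψ (φ x) = ((ψ (k := k)).comp φ) x := rfl
    _ = x := by rw [h]; rfl

theorem φ_inj : Function.Injective (φ (k := k)) :=
  Function.LeftInverse.injective ψφ

end Stmt15Aux

theorem A8_no (k : Type u) [Field k] (y : A8 k)
    (K : ∀ z : A8 k, y * z = 0 ↔ ∃ c : A8 k, z = c * y) : False := by
  have hyy : y * y = 0 := (K y).2 ⟨1, (one_mul y).symm⟩
  have h0 : y.c0 = 0 := by
    have h : y.c0 * y.c0 = (0 : k) := (congrArg A8.c0 hyy)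
    exact mul_self_eq_zero.1 h
  have Q5 : y.c0*y.c5 + y.c5*y.c0 + y.c1*y.c2 + y.c2*y.c1 + y.c4*y.c4 = (0:k) :=
    congrArg A8.c5 hyy
  have Q6 : y.c0*y.c6 + y.c6*y.c0 + y.c1*y.c3 + y.c3*y.c1 + y.c4*y.c4 = (0:k) :=
    congrArg A8.c6 hyy
  have Q7 : y.c0*y.c7 + y.c7*y.c0 + y.c2*y.c3 + y.c3*y.c2 = (0:k) :=
    congrArg A8.c7 hyy
  obtain ⟨p, hp⟩ := (K A8.eST).1 (by ext <;> simp [A8.eST, h0])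
  obtain ⟨q, hq⟩ := (K A8.eSU).1 (by ext <;> simp [A8.eSU, h0])
  obtain ⟨r, hr⟩ := (K A8.eTU).1 (by ext <;> simp [A8.eTU, h0])
  have P1 : p.c0*y.c1 + p.c1*y.c0 = (0:k) := (congrArg A8.c1 hp).symm
  have P2 : p.c0*y.c2 + p.c2*y.c0 = (0:k) := (congrArg A8.c2 hp).symm
  have P3 : p.c0*y.c3 + p.c3*y.c0 = (0:k) := (congrArg A8.c3 hp).symm
  have P4 : p.c0*y.c4 + p.c4*y.c0 = (0:k) := (congrArg A8.c4 hp).symm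
  have P5 : p.c0*y.c5 + p.c5*y.c0 + p.c1*y.c2 + p.c2*y.c1 + p.c4*y.c4 = (1:k) :=
    (congrArg A8.c5 hp).symm
  have P6 : p.c0*y.c6 + p.c6*y.c0 + p.c1*y.c3 + p.c3*y.c1 + p.c4*y.c4 = (0:k) :=
    (congrArg A8.c6 hp).symm
  have P7 : p.c0*y.c7 + p.c7*y.c0 + p.c2*y.c3 + p.c3*y.c2 = (0:k) :=
    (congrArg A8.c7 hp).symm
  have S1 : q.c0*y.c1 + q.c1*y.c0 = (0:k) := (congrArg A8.c1 hq).symm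
  have S2 : q.c0*y.c2 + q.c2*y.c0 = (0:k) := (congrArg A8.c2 hq).symm
  have S3 : q.c0*y.c3 + q.c3*y.c0 = (0:k) := (congrArg A8.c3 hq).symm
  have S4 : q.c0*y.c4 + q.c4*y.c0 = (0:k) := (congrArg A8.c4 hq).symm
  have S5 : q.c0*y.c5 + q.c5*y.c0 + q.c1*y.c2 + q.c2*y.c1 + q.c4*y.c4 = (0:k) :=
    (congrArg A8.c5 hq).symm
  have S6 : q.c0*y.c6 + q.c6*y.c0 + q.c1*y.c3 + q.c3*y.c1 + q.c4*y.c4 = (1:k) :=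
    (congrArg A8.c6 hq).symm
  have S7 : q.c0*y.c7 + q.c7*y.c0 + q.c2*y.c3 + q.c3*y.c2 = (0:k) :=
    (congrArg A8.c7 hq).symm
  have R1 : r.c0*y.c1 + r.c1*y.c0 = (0:k) := (congrArg A8.c1 hr).symm
  have R2 : r.c0*y.c2 + r.c2*y.c0 = (0:k) := (congrArg A8.c2 hr).symm
  have R3 : r.c0*y.c3 + r.c3*y.c0 = (0:k) := (congrArg A8.c3 hr).symm
  have R4 : r.c0*y.c4 + r.c4*y.c0 = (0:k) := (congrArg A8.c4 hr).symm
  have R5 : r.c0*y.c5 + r.c5*y.c0 + r.c1*y.c2 + r.c2*y.c1 + r.c4*y.c4 = (0:k) :=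
    (congrArg A8.c5 hr).symm
  have R6 : r.c0*y.c6 + r.c6*y.c0 + r.c1*y.c3 + r.c3*y.c1 + r.c4*y.c4 = (0:k) :=
    (congrArg A8.c6 hr).symm
  have R7 : r.c0*y.c7 + r.c7*y.c0 + r.c2*y.c3 + r.c3*y.c2 = (1:k) :=
    (congrArg A8.c7 hr).symm
  -- remove the `y.c0` terms everywhere
  simp only [h0, mul_zero, zero_mul, add_zero, zero_add] at Q5 Q6 Q7 P1 P2 P3 P4 P5 P6 P7
  simp only [h0, mul_zero, zero_mul, add_zero, zero_add] at S1 S2 S3 S4 S5 S6 S7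
  simp only [h0, mul_zero, zero_mul, add_zero, zero_add] at R1 R2 R3 R4 R5 R6 R7
  by_cases hall : y.c1 = 0 ∧ y.c2 = 0 ∧ y.c3 = 0 ∧ y.c4 = 0
  · obtain ⟨ha, hb, hc, hd⟩ := hall
    simp only [ha, hb, hc, hd, mul_zero, zero_mul, add_zero, zero_add] at P5 P7 R5 R7
    -- P5 : p.c0*y.c5 = 1, P7 : p.c0*y.c7 = 0, R5 : r.c0*y.c5 = 0, R7 : r.c0*y.c7 = 1
    have h10 : (1:k) = 0 := by
      linear_combination (-1 : k) * P5 + (p.c0*y.c7)*R5 + (-(p.c0*y.c5))*R7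
    exact one_ne_zero h10
  · -- some linear coordinate is nonzero, hence p.c0 = q.c0 = r.c0 = 0
    have hp0 : p.c0 = 0 := by
      by_contra hcon
      exact hall ⟨(mul_eq_zero.1 P1).resolve_left hcon, (mul_eq_zero.1 P2).resolve_left hcon,
        (mul_eq_zero.1 P3).resolve_left hcon, (mul_eq_zero.1 P4).resolve_left hcon⟩
    have hq0 : q.c0 = 0 := by
      by_contra hcon
      exact hall ⟨(mul_eq_zero.1 S1).resolve_left hcon, (mul_eq_zero.1 S2).resolve_left hcon,
        (mul_eq_zero.1 S3).resolve_left hcon, (mul_eq_zero.1 S4).resolve_left hcon⟩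
    have hr0 : r.c0 = 0 := by
      by_contra hcon
      exact hall ⟨(mul_eq_zero.1 R1).resolve_left hcon, (mul_eq_zero.1 R2).resolve_left hcon,
        (mul_eq_zero.1 R3).resolve_left hcon, (mul_eq_zero.1 R4).resolve_left hcon⟩
    simp only [hp0, hq0, hr0, mul_zero, zero_mul, add_zero, zero_add] at P5 P6 P7 S5 S6 S7
    simp only [hp0, hq0, hr0, mul_zero, zero_mul, add_zero, zero_add] at R5 R6 R7
    -- now:
    -- P5 : p.c1*y.c2 + p.c2*y.c1 + p.c4*y.c4 = 1
    -- P6 : p.c1*y.c3 + p.c3*y.c1 + p.c4*y.c4 = 0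
    -- P7 : p.c2*y.c3 + p.c3*y.c2 = 0, similarly S5..S7 (S6 = 1), R5..R7 (R7 = 1)
    by_cases h2 : (2:k) = 0
    · -- characteristic 2
      have hd0 : y.c4 = 0 := by
        have h : y.c4 * y.c4 = 0 := by linear_combination Q5 - (y.c1*y.c2)*h2
        exact mul_self_eq_zero.1 h
      by_cases hc : y.c3 = 0
      · simp only [hc, hd0, mul_zero, zero_mul, add_zero, zero_add] at S6 S7 R7
        -- S6 : q.c3*y.c1 = 1, S7 : q.c3*y.c2 = 0, R7 : r.c3*y.c2 = 1
        have h10 : (1:k) = 0 := by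
          linear_combination (-1:k)*S6 + (y.c1*r.c3)*S7 + (-(y.c1*q.c3))*R7
        exact one_ne_zero h10
      · have h : y.c3 * y.c3 = 0 := by
          linear_combination (-(y.c3*y.c3))*P5 + (y.c2*y.c3)*P6 + (y.c1*y.c3)*P7 +
            (-(y.c1*y.c2*y.c3*p.c3))*h2 + (y.c3*p.c4*(y.c3 - y.c2))*hd0
        exact hc (mul_self_eq_zero.1 h)
    · -- characteristic ≠ 2
      have hbc : y.c2 * y.c3 = 0 := by
        have h : (2:k) * (y.c2*y.c3) = 0 := by linear_combination Q7
        exact (mul_eq_zero.1 h).resolve_left h2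
      rcases mul_eq_zero.1 hbc with hb | hc
      · have hd0 : y.c4 = 0 := by
          have h : y.c4*y.c4 = 0 := by linear_combination Q5 - (2*y.c1)*hb
          exact mul_self_eq_zero.1 h
        have hac : y.c1 * y.c3 = 0 := by
          have h : (2:k) * (y.c1*y.c3) = 0 := by linear_combination Q6 - y.c4*hd0
          exact (mul_eq_zero.1 h).resolve_left h2
        rcases mul_eq_zero.1 hac with ha | hc
        · have h10 : (1:k) = 0 := by
            linear_combination (-1:k)*P5 + p.c1*hb + p.c2*ha + p.c4*hd0
          exact one_ne_zero h10
        · have h10 : (1:k) = 0 := by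
            linear_combination (-1:k)*R7 + r.c2*hc + r.c3*hb
          exact one_ne_zero h10
      · have hd0 : y.c4 = 0 := by
          have h : y.c4*y.c4 = 0 := by linear_combination Q6 - (2*y.c1)*hc
          exact mul_self_eq_zero.1 h
        have hab : y.c1 * y.c2 = 0 := by
          have h : (2:k) * (y.c1*y.c2) = 0 := by linear_combination Q5 - y.c4*hd0
          exact (mul_eq_zero.1 h).resolve_left h2
        rcases mul_eq_zero.1 hab with ha | hb
        · have h10 : (1:k) = 0 := by
            linear_combination (-1:k)*S6 + q.c1*hc + q.c3*ha + q.c4*hd0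
          exact one_ne_zero h10
        · have h10 : (1:k) = 0 := by
            linear_combination (-1:k)*R7 + r.c2*hc + r.c3*hb
          exact one_ne_zero h10

/-- for any field `k`, in
`R = k[s,t,u,v]/(s², sv, t², tv, u², uv, v² - st - su)` there is no element `x`
with `ann(x) = (x)`. -/
theorem stmt15 (k : Type u) [Field k] :
    ¬ ∃ x : R14 k, annIdeal (R14 k) x = Ideal.span {x} := by
  rintro ⟨x, hx⟩
  have hxmem : ∀ w : R14 k, w ∈ annIdeal (R14 k) x ↔ x * w = 0 := fun w => by
    rw [annIdeal, LinearMap.mem_ker, LinearMap.mulLeft_apply]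
  have hxw : ∀ w : R14 k, x * w = 0 ↔ ∃ c : R14 k, w = c * x := by
    intro w
    rw [← hxmem, hx, Ideal.mem_span_singleton']
    constructor
    · rintro ⟨c, hc⟩; exact ⟨c, hc.symm⟩
    · rintro ⟨c, hc⟩; exact ⟨c, hc.symm⟩
  apply A8_no k (Stmt15Aux.φ x)
  intro z
  constructor
  · intro h
    have h2 : x * Stmt15Aux.ψ z = 0 := by
      apply Stmt15Aux.φ_inj
      rw [map_mul, Stmt15Aux.φψ, h, map_zero]
    obtain ⟨c, hc⟩ := (hxw _).1 h2
    refine ⟨Stmt15Aux.φ c, ?_⟩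
    calc z = Stmt15Aux.φ (Stmt15Aux.ψ z) := (Stmt15Aux.φψ z).symm
      _ = Stmt15Aux.φ (c * x) := by rw [hc]
      _ = Stmt15Aux.φ c * Stmt15Aux.φ x := map_mul _ _ _
  · rintro ⟨c, rfl⟩
    have hxx : x * x = 0 := (hxw x).2 ⟨1, (one_mul x).symm⟩
    calc Stmt15Aux.φ x * (c * Stmt15Aux.φ x)
        = c * (Stmt15Aux.φ x * Stmt15Aux.φ x) := by ring
      _ = c * Stmt15Aux.φ (x * x) := by rw [map_mul]
      _ = 0 := by rw [hxx, map_zero, mul_zero]
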